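/- Let I and J be open intervals of ℝ, let ρ : I → ℝ be three times differentiable with ρ(t) ∈ J and ρ'(t) ≠ 0 for all t ∈ I, and let x : J → ℝ be three times differentiable with x(ρ(t)) = t for all t ∈ I. Then for every t ∈ I, writing r = ρ(t), the equality r² x'''(r) + r x''(r) − x'(r) = 0 holds if and only if ρ'''(t) ρ'(t) ρ(t)² − 3 ρ''(t)² ρ(t)² + ρ''(t) ρ'(t)² ρ(t) + ρ'(t)⁴ = 0. In other words, a function ρ with nonvanishing derivative satisfies the nonlinear third-order equation ρ''' ρ' ρ² − 3 (ρ'')² ρ² + ρ'' (ρ')² ρ + (ρ')⁴ = 0 if and only if its inverse function x satisfies the linear ODE ρ² x''' + ρ x'' − x' = 0. -/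
import Mathlib


theorem stmt_8 (I J : Set ℝ)
    (hIopen : IsOpen I) (hIconv : Convex ℝ I)
    (hJopen : IsOpen J) (hJconv : Convex ℝ J)
    (ρ x : ℝ → ℝ)
    (hρJ : ∀ t ∈ I, ρ t ∈ J)
    (hρ' : ∀ t ∈ I, deriv ρ t ≠ 0)
    (hρ1 : ∀ t ∈ I, DifferentiableAt ℝ ρ t)
    (hρ2 : ∀ t ∈ I, DifferentiableAt ℝ (deriv ρ) t)
    (hρ3 : ∀ t ∈ I, DifferentiableAt ℝ (deriv (deriv ρ)) t)
    (hx1 : ∀ r ∈ J, DifferentiableAt ℝ x r)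
    (hx2 : ∀ r ∈ J, DifferentiableAt ℝ (deriv x) r)
    (hx3 : ∀ r ∈ J, DifferentiableAt ℝ (deriv (deriv x)) r)
    (hinv : ∀ t ∈ I, x (ρ t) = t) :
    ∀ t ∈ I,
      ((ρ t) ^ 2 * deriv (deriv (deriv x)) (ρ t) + ρ t * deriv (deriv x) (ρ t)
          - deriv x (ρ t) = 0) ↔
      (deriv (deriv (deriv ρ)) t * deriv ρ t * (ρ t) ^ 2
          - 3 * (deriv (deriv ρ) t) ^ 2 * (ρ t) ^ 2
          + deriv (deriv ρ) t * (deriv ρ t) ^ 2 * ρ t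
          + (deriv ρ t) ^ 4 = 0) := by
  -- First derivative identity: x'(ρ t) * ρ'(t) = 1 on I
  have E1 : ∀ t ∈ I, deriv x (ρ t) * deriv ρ t = 1 := by
    intro t ht
    have h1 : HasDerivAt (fun s => x (ρ s)) (deriv x (ρ t) * deriv ρ t) t :=
      (hx1 _ (hρJ t ht)).hasDerivAt.comp t (hρ1 t ht).hasDerivAt
    have h2 : HasDerivAt (fun s => x (ρ s)) 1 t := by
      refine (hasDerivAt_id t).congr_of_eventuallyEq ?_
      filter_upwards [hIopen.mem_nhds ht] with s hs
      exact hinv s hs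
    exact h1.unique h2
  -- Second derivative identity: x''(ρ)ρ'² + x'(ρ)ρ'' = 0 on I
  have E2 : ∀ t ∈ I,
      deriv (deriv x) (ρ t) * deriv ρ t * deriv ρ t
        + deriv x (ρ t) * deriv (deriv ρ) t = 0 := by
    intro t ht
    have hA : HasDerivAt (fun s => deriv x (ρ s)) (deriv (deriv x) (ρ t) * deriv ρ t) t :=
      (hx2 _ (hρJ t ht)).hasDerivAt.comp t (hρ1 t ht).hasDerivAt
    have hB : HasDerivAt (deriv ρ) (deriv (deriv ρ) t) t := (hρ2 t ht).hasDerivAt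
    have h1 : HasDerivAt (fun s => deriv x (ρ s) * deriv ρ s)
        (deriv (deriv x) (ρ t) * deriv ρ t * deriv ρ t
          + deriv x (ρ t) * deriv (deriv ρ) t) t := hA.mul hB
    have h2 : HasDerivAt (fun s => deriv x (ρ s) * deriv ρ s) 0 t := by
      refine (hasDerivAt_const t (1 : ℝ)).congr_of_eventuallyEq ?_
      filter_upwards [hIopen.mem_nhds ht] with s hs
      exact E1 s hs
    exact h1.unique h2
  -- Third derivative identity
  have E3 : ∀ t ∈ I,
      (deriv (deriv (deriv x)) (ρ t) * deriv ρ t * (deriv ρ t) ^ 2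
        + deriv (deriv x) (ρ t) * (2 * deriv ρ t ^ 1 * deriv (deriv ρ) t))
        + (deriv (deriv x) (ρ t) * deriv ρ t * deriv (deriv ρ) t
          + deriv x (ρ t) * deriv (deriv (deriv ρ)) t) = 0 := by
    intro t ht
    have hA : HasDerivAt (fun s => deriv x (ρ s)) (deriv (deriv x) (ρ t) * deriv ρ t) t :=
      (hx2 _ (hρJ t ht)).hasDerivAt.comp t (hρ1 t ht).hasDerivAt
    have hB : HasDerivAt (deriv ρ) (deriv (deriv ρ) t) t := (hρ2 t ht).hasDerivAt
    have hC : HasDerivAt (fun s => deriv (deriv x) (ρ s))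
        (deriv (deriv (deriv x)) (ρ t) * deriv ρ t) t :=
      (hx3 _ (hρJ t ht)).hasDerivAt.comp t (hρ1 t ht).hasDerivAt
    have hD : HasDerivAt (fun s => (deriv ρ s) ^ 2)
        (2 * deriv ρ t ^ 1 * deriv (deriv ρ) t) t := hB.pow 2
    have hE : HasDerivAt (deriv (deriv ρ)) (deriv (deriv (deriv ρ)) t) t :=
      (hρ3 t ht).hasDerivAt
    have h1 : HasDerivAt
        (fun s => deriv (deriv x) (ρ s) * (deriv ρ s) ^ 2
          + deriv x (ρ s) * deriv (deriv ρ) s)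
        ((deriv (deriv (deriv x)) (ρ t) * deriv ρ t * (deriv ρ t) ^ 2
          + deriv (deriv x) (ρ t) * (2 * deriv ρ t ^ 1 * deriv (deriv ρ) t))
          + (deriv (deriv x) (ρ t) * deriv ρ t * deriv (deriv ρ) t
            + deriv x (ρ t) * deriv (deriv (deriv ρ)) t)) t :=
      (hC.mul hD).add (hA.mul hE)
    have h2 : HasDerivAt
        (fun s => deriv (deriv x) (ρ s) * (deriv ρ s) ^ 2
          + deriv x (ρ s) * deriv (deriv ρ) s) 0 t := by
      refine (hasDerivAt_const t (0 : ℝ)).congr_of_eventuallyEq ?_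
      filter_upwards [hIopen.mem_nhds ht] with s hs
      have := E2 s hs
      nlinarith [this]
    exact h1.unique h2
  -- Algebra
  intro t ht
  set p := ρ t
  set p1 := deriv ρ t
  set p2 := deriv (deriv ρ) t
  set p3 := deriv (deriv (deriv ρ)) t
  set a := deriv x p
  set b := deriv (deriv x) p
  set c := deriv (deriv (deriv x)) p
  have e1 : a * p1 = 1 := E1 t ht
  have e2 : b * p1 * p1 + a * p2 = 0 := E2 t ht
  have e3 : (c * p1 * p1 ^ 2 + b * (2 * p1 ^ 1 * p2)) + (b * p1 * p2 + a * p3) = 0 :=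
    E3 t ht
  have hp1 : p1 ≠ 0 := hρ' t ht
  have key : (p ^ 2 * c + p * b - a) * p1 ^ 5
      = -(p3 * p1 * p ^ 2 - 3 * p2 ^ 2 * p ^ 2 + p2 * p1 ^ 2 * p + p1 ^ 4) := by
    linear_combination (p ^ 2 * p1 ^ 2) * e3 + (p * p1 ^ 3 - 3 * p ^ 2 * p1 * p2) * e2
      + (3 * p2 ^ 2 * p ^ 2 - p3 * p1 * p ^ 2 - p2 * p1 ^ 2 * p - p1 ^ 4) * e1
  have hp15 : (p1 : ℝ) ^ 5 ≠ 0 := pow_ne_zero 5 hp1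
  constructor
  · intro h
    have : (0 : ℝ) * p1 ^ 5 = -(p3 * p1 * p ^ 2 - 3 * p2 ^ 2 * p ^ 2 + p2 * p1 ^ 2 * p + p1 ^ 4) := by
      rw [← h]; exact key
    linarith [this]
  · intro h
    have h0 : (p ^ 2 * c + p * b - a) * p1 ^ 5 = 0 := by rw [key, h]; ring
    rcases mul_eq_zero.mp h0 with h' | h'
    · exact h'
    · exact absurd h' hp15
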